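/- Let M = (S, 𝓕) be a matroid with rank function r and let P_base(M) denote the polytope spanned by the incidence vectors of all bases of M. Then the up-hull of P_base(M) equals { x ∈ ℝ^S : x(U) ≥ r(S) − r(S \ U) for all U ⊆ S }, where x(U) = Σ_{s ∈ U} x(s). -/

import Mathlib

open Finset

variable {α : Type*} [DecidableEq α] [Fintype α]

/-- `X` is subfeasible: contained in some feasible set. -/
def Subfeasible (F : Set (Finset α)) (X : Finset α) : Prop :=
  ∃ Y ∈ F, X ⊆ Y

/-- Greedoid axioms: `∅` is feasible, and the exchange property. -/
def IsGreedoid (F : Set (Finset α)) : Prop :=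
  (∅ : Finset α) ∈ F ∧
    ∀ X ∈ F, ∀ Y ∈ F, X.card < Y.card → ∃ y ∈ Y, y ∉ X ∧ insert y X ∈ F

/-- Local union property. -/
def LocalUnion (F : Set (Finset α)) : Prop :=
  ∀ A ∈ F, ∀ B ∈ F, Subfeasible F (A ∪ B) → A ∪ B ∈ F

/-- Local intersection property. -/
def LocalInter (F : Set (Finset α)) : Prop :=
  ∀ A ∈ F, ∀ B ∈ F, Subfeasible F (A ∪ B) → A ∩ B ∈ F

/-- Local forest property. -/
def LocalForest (F : Set (Finset α)) : Prop :=
  ∀ A ∈ F, ∀ x y z : α,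
    insert x A ∈ F → insert y A ∈ F → insert x (insert y A) ∈ F →
      insert z (insert x (insert y A)) ∈ F →
      insert z (insert x A) ∈ F ∨ insert z (insert y A) ∈ F

/-- The rank function of a greedoid: max cardinality of a feasible subset. -/
noncomputable def grank (F : Set (Finset α)) (A : Finset α) : ℕ :=
  sSup {n : ℕ | ∃ X ∈ F, X ⊆ A ∧ X.card = n}

/-- A base: a feasible set of maximum size. -/
def IsBase (F : Set (Finset α)) (B : Finset α) : Prop :=
  B ∈ F ∧ ∀ C ∈ F, C.card ≤ B.card

/-- The set of continuations of a feasible set `A`. -/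
def Gamma (F : Set (Finset α)) (A : Finset α) : Set α :=
  {x | x ∉ A ∧ insert x A ∈ F}

/-- `P` is the `x`-path in `A`: the unique inclusion-minimal feasible subset
of `A` containing `x`. -/
def IsPathIn (F : Set (Finset α)) (A : Finset α) (x : α) (P : Finset α) : Prop :=
  P ∈ F ∧ P ⊆ A ∧ x ∈ P ∧ ∀ Q ∈ F, Q ⊆ A → x ∈ Q → P ⊆ Q

/-- `P` is a path. -/
def IsPath (F : Set (Finset α)) (P : Finset α) : Prop :=
  ∃ A ∈ F, ∃ x ∈ A, IsPathIn F A x P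

/-- `l` is a feasible ordering (of the set of its elements): every prefix is feasible. -/
def FeasibleOrdering (F : Set (Finset α)) (l : List α) : Prop :=
  l.Nodup ∧ ∀ i : ℕ, (l.take i).toFinset ∈ F

/-- `B` is a greedy base for maximizing `w`. -/
def GreedyMaxBase (F : Set (Finset α)) (w : Finset α → ℝ) (B : Finset α) : Prop :=
  IsBase F B ∧ ∃ l : List α, FeasibleOrdering F l ∧ l.toFinset = B ∧
    ∀ (i : ℕ) (hi : i < l.length), ∀ y ∈ Gamma F (l.take i).toFinset,
      w (insert y (l.take i).toFinset) ≤ w (insert (l.get ⟨i, hi⟩) (l.take i).toFinset)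

/-- `B` is a greedy base for minimizing `w`. -/
def GreedyMinBase (F : Set (Finset α)) (w : Finset α → ℝ) (B : Finset α) : Prop :=
  IsBase F B ∧ ∃ l : List α, FeasibleOrdering F l ∧ l.toFinset = B ∧
    ∀ (i : ℕ) (hi : i < l.length), ∀ y ∈ Gamma F (l.take i).toFinset,
      w (insert (l.get ⟨i, hi⟩) (l.take i).toFinset) ≤ w (insert y (l.take i).toFinset)

/-- The shadow vector of a feasible set `B`: `sh_B(x) = |B| - r(B \ {x})`. -/
noncomputable def shVec (F : Set (Finset α)) (B : Finset α) : α → ℝ :=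
  fun x => (B.card : ℝ) - (grank F (B.erase x) : ℝ)

section Aux

lemma grank_bdd (F : Set (Finset α)) (A : Finset α) :
    BddAbove {n : ℕ | ∃ X ∈ F, X ⊆ A ∧ X.card = n} := by
  refine ⟨A.card, ?_⟩
  rintro n ⟨X, -, hXA, rfl⟩
  exact Finset.card_le_card hXA

lemma grank_nonempty_aux (F : Set (Finset α)) (hEmpty : (∅ : Finset α) ∈ F) (A : Finset α) :
    {n : ℕ | ∃ X ∈ F, X ⊆ A ∧ X.card = n}.Nonempty :=
  ⟨0, ∅, hEmpty, Finset.empty_subset A, Finset.card_empty⟩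

lemma grank_spec (F : Set (Finset α)) (hEmpty : (∅ : Finset α) ∈ F) (A : Finset α) :
    ∃ X ∈ F, X ⊆ A ∧ X.card = grank F A :=
  Nat.sSup_mem (grank_nonempty_aux F hEmpty A) (grank_bdd F A)

lemma le_grank (F : Set (Finset α)) {X A : Finset α} (hX : X ∈ F) (hXA : X ⊆ A) :
    X.card ≤ grank F A :=
  le_csSup (grank_bdd F A) ⟨X, hX, hXA, rfl⟩

lemma grank_empty (F : Set (Finset α)) (hEmpty : (∅ : Finset α) ∈ F) :
    grank F (∅ : Finset α) = 0 := by
  obtain ⟨X, hXF, hXA, hXc⟩ := grank_spec F hEmpty ∅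
  rw [← hXc, Finset.card_eq_zero, ← Finset.subset_empty]
  exact hXA

lemma grank_mono (F : Set (Finset α)) (hEmpty : (∅ : Finset α) ∈ F) {A B : Finset α}
    (hAB : A ⊆ B) : grank F A ≤ grank F B := by
  obtain ⟨X, hXF, hXA, hXc⟩ := grank_spec F hEmpty A
  exact hXc ▸ le_grank F hXF (hXA.trans hAB)

lemma grank_insert_le (F : Set (Finset α)) (hEmpty : (∅ : Finset α) ∈ F)
    (hSub : ∀ X ∈ F, ∀ Y : Finset α, Y ⊆ X → Y ∈ F) (a : α) (A : Finset α) :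
    grank F (insert a A) ≤ grank F A + 1 := by
  obtain ⟨X, hXF, hXA, hXc⟩ := grank_spec F hEmpty (insert a A)
  have h1 : X.erase a ∈ F := hSub X hXF _ (Finset.erase_subset a X)
  have h2 : X.erase a ⊆ A := by
    intro y hy
    rcases Finset.mem_insert.1 (hXA (Finset.mem_of_mem_erase hy)) with h | h
    · exact absurd h (Finset.ne_of_mem_erase hy)
    · exact h
  have h3 : X.card ≤ (X.erase a).card + 1 := by
    have : X ⊆ insert a (X.erase a) := Finset.subset_insert_iff.2 (le_refl _)
    exact (Finset.card_le_card this).trans (Finset.card_insert_le _ _)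
  calc grank F (insert a A) = X.card := hXc.symm
    _ ≤ (X.erase a).card + 1 := h3
    _ ≤ grank F A + 1 := Nat.add_le_add_right (le_grank F h1 h2) 1

lemma grank_extend (F : Set (Finset α)) (hEmpty : (∅ : Finset α) ∈ F)
    (hSub : ∀ X ∈ F, ∀ Y : Finset α, Y ⊆ X → Y ∈ F)
    (hExch : ∀ X ∈ F, ∀ Y ∈ F, X.card < Y.card → ∃ y ∈ Y, y ∉ X ∧ insert y X ∈ F)
    (a : α) {A B : Finset α} (hB : B ∈ F) (hBA : B ⊆ A) (hcard : B.card = grank F A) :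
    ∃ B' ∈ F, B ⊆ B' ∧ B' ⊆ insert a A ∧ B'.card = grank F (insert a A) := by
  rcases eq_or_lt_of_le (grank_mono F hEmpty (Finset.subset_insert a A)) with h | h
  · exact ⟨B, hB, le_refl _, hBA.trans (Finset.subset_insert a A), by rw [hcard, h]⟩
  · obtain ⟨X, hXF, hXA, hXc⟩ := grank_spec F hEmpty (insert a A)
    have hlt : B.card < X.card := by rw [hcard, hXc]; exact h
    obtain ⟨y, hyX, hyB, hins⟩ := hExch B hB X hXF hlt
    refine ⟨insert y B, hins, Finset.subset_insert y B, ?_, ?_⟩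
    · exact Finset.insert_subset (hXA hyX) (hBA.trans (Finset.subset_insert a A))
    · have h1 : grank F (insert a A) ≤ grank F A + 1 := grank_insert_le F hEmpty hSub a A
      have h2 : grank F A + 1 ≤ grank F (insert a A) := h
      rw [Finset.card_insert_of_notMem hyB, hcard]
      omega

lemma grank_chain (F : Set (Finset α)) (hEmpty : (∅ : Finset α) ∈ F)
    (hSub : ∀ X ∈ F, ∀ Y : Finset α, Y ⊆ X → Y ∈ F)
    (hExch : ∀ X ∈ F, ∀ Y ∈ F, X.card < Y.card → ∃ y ∈ Y, y ∉ X ∧ insert y X ∈ F)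
    (l : List α) : ∃ B ∈ F, B ⊆ l.toFinset ∧ B.card = grank F l.toFinset ∧
      ∀ i : ℕ, grank F ((l.drop i).toFinset) ≤ (B ∩ (l.drop i).toFinset).card := by
  induction l with
  | nil =>
      refine ⟨∅, hEmpty, by simp, ?_, ?_⟩
      · simp [grank_empty F hEmpty]
      · intro i
        simp [grank_empty F hEmpty]
  | cons a l' ih =>
      obtain ⟨B', hB'F, hB'sub, hB'card, hB'i⟩ := ih
      obtain ⟨B, hBF, hB'B, hBsub, hBcard⟩ :=
        grank_extend F hEmpty hSub hExch a hB'F hB'sub hB'card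
      refine ⟨B, hBF, by simpa using hBsub, by simpa using hBcard, ?_⟩
      intro i
      cases i with
      | zero =>
          simp only [List.drop_zero]
          have h : B ∩ (a :: l').toFinset = B := Finset.inter_eq_left.2 (by simpa using hBsub)
          rw [h, ← (by simpa using hBcard : B.card = grank F ((a :: l').toFinset))]
      | succ i =>
          simp only [List.drop_succ_cons]
          exact (hB'i i).trans (Finset.card_le_card
            (Finset.inter_subset_inter hB'B (le_refl _)))

lemma abel_aux (w c : ℕ → ℝ) (hw : ∀ i j : ℕ, i ≤ j → w j ≤ w i)
    (hc : ∀ k : ℕ, 0 ≤ ∑ i ∈ Finset.range k, c i) :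
    ∀ m : ℕ, w m * (∑ i ∈ Finset.range (m + 1), c i) ≤ ∑ i ∈ Finset.range (m + 1), w i * c i := by
  intro m
  induction m with
  | zero => simp
  | succ m ih =>
      rw [Finset.sum_range_succ (fun i => w i * c i), Finset.sum_range_succ c]
      have h1 : w (m + 1) * (∑ i ∈ Finset.range (m + 1), c i + c (m + 1)) =
          w (m + 1) * (∑ i ∈ Finset.range (m + 1), c i) + w (m + 1) * c (m + 1) := by ring
      rw [h1]
      have h2 : w (m + 1) * (∑ i ∈ Finset.range (m + 1), c i) ≤
          w m * (∑ i ∈ Finset.range (m + 1), c i) :=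
        mul_le_mul_of_nonneg_right (hw m (m + 1) (Nat.le_succ m)) (hc (m + 1))
      linarith

lemma abel_main (w c : ℕ → ℝ) (n : ℕ) (hw : ∀ i j : ℕ, i ≤ j → w j ≤ w i)
    (hw0 : ∀ i : ℕ, 0 ≤ w i) (hc : ∀ k : ℕ, 0 ≤ ∑ i ∈ Finset.range k, c i) :
    0 ≤ ∑ i ∈ Finset.range n, w i * c i := by
  cases n with
  | zero => simp
  | succ m =>
      have h1 := abel_aux w c hw hc m
      have h2 : 0 ≤ w m * (∑ i ∈ Finset.range (m + 1), c i) :=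
        mul_nonneg (hw0 m) (hc (m + 1))
      linarith

lemma list_sum_eq (g : α → ℝ) :
    ∀ l : List α, l.Nodup →
      ∑ s ∈ l.toFinset, g s = ∑ i : Fin l.length, g (l.get i) := by
  intro l
  induction l with
  | nil => simp
  | cons a l' ih =>
      intro hnd
      have hnd' : l'.Nodup := (List.nodup_cons.1 hnd).2
      have ha : a ∉ l' := (List.nodup_cons.1 hnd).1
      rw [List.toFinset_cons, Finset.sum_insert (by simpa using ha), ih hnd']
      show _ = ∑ i : Fin (l'.length + 1), g ((a :: l').get i)
      rw [Fin.sum_univ_succ]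
      rfl

lemma list_sum_eq' (g : α → ℝ) (l : List α) (hnd : l.Nodup) :
    ∑ s ∈ l.toFinset, g s =
      ∑ i ∈ Finset.range l.length, (if h : i < l.length then g (l.get ⟨i, h⟩) else 0) := by
  rw [list_sum_eq g l hnd,
    ← Fin.sum_univ_eq_sum_range (fun i => if h : i < l.length then g (l.get ⟨i, h⟩) else 0)]
  refine Finset.sum_congr rfl fun i _ => ?_
  rw [dif_pos i.isLt, Fin.eta]

end Aux

lemma base_card (F : Set (Finset α)) (hEmpty : (∅ : Finset α) ∈ F) {B : Finset α}
    (hB : IsBase F B) : B.card = grank F Finset.univ := by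
  obtain ⟨X, hXF, hXU, hXc⟩ := grank_spec F hEmpty Finset.univ
  exact le_antisymm (le_grank F hB.1 (Finset.subset_univ B)) (hXc ▸ hB.2 X hXF)

lemma easy_dir (F : Set (Finset α)) (hEmpty : (∅ : Finset α) ∈ F)
    (hSub : ∀ X ∈ F, ∀ Y : Finset α, Y ⊆ X → Y ∈ F)
    {z : α → ℝ}
    (hz : z ∈ convexHull ℝ {v : α → ℝ | ∃ B : Finset α, IsBase F B ∧
      v = fun s => if s ∈ B then (1 : ℝ) else 0}) (U : Finset α) :
    (grank F Finset.univ : ℝ) - (grank F (Finset.univ \ U) : ℝ) ≤ ∑ s ∈ U, z s := by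
  have hconv : Convex ℝ {v : α → ℝ |
      (grank F Finset.univ : ℝ) - (grank F (Finset.univ \ U) : ℝ) ≤ ∑ s ∈ U, v s} := by
    refine convex_halfSpace_ge ?_ _
    constructor
    · intro a b; simp [Finset.sum_add_distrib]
    · intro c a; simp [Finset.mul_sum]
  refine convexHull_min ?_ hconv hz
  rintro v ⟨B, hB, rfl⟩
  simp only [Set.mem_setOf_eq]
  have h1 : (∑ s ∈ U, if s ∈ B then (1 : ℝ) else 0) = ((U ∩ B).card : ℝ) := by
    rw [Finset.sum_boole, Finset.filter_mem_eq_inter]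
  rw [h1]
  have h2 : (B ∩ U).card + (B \ U).card = B.card := Finset.card_inter_add_card_sdiff B U
  have h3 : (B \ U).card ≤ grank F (Finset.univ \ U) := by
    refine le_grank F (hSub B hB.1 _ (Finset.sdiff_subset)) ?_
    intro y hy
    simp only [Finset.mem_sdiff, Finset.mem_univ, true_and]
    exact (Finset.mem_sdiff.1 hy).2
  have h4 : B.card = grank F Finset.univ := base_card F hEmpty hB
  have h5 : (U ∩ B).card = (B ∩ U).card := by rw [Finset.inter_comm]
  have h6 : grank F Finset.univ ≤ (U ∩ B).card + grank F (Finset.univ \ U) := by omega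
  have h7 := Nat.cast_le (α := ℝ) |>.2 h6
  push_cast at h7 ⊢
  linarith

open Pointwise in
lemma hard_dir (F : Set (Finset α)) (hEmpty : (∅ : Finset α) ∈ F)
    (hSub : ∀ X ∈ F, ∀ Y : Finset α, Y ⊆ X → Y ∈ F)
    (hExch : ∀ X ∈ F, ∀ Y ∈ F, X.card < Y.card → ∃ y ∈ Y, y ∉ X ∧ insert y X ∈ F)
    (x : α → ℝ)
    (hx : ∀ U : Finset α,
      (grank F Finset.univ : ℝ) - (grank F (Finset.univ \ U) : ℝ) ≤ ∑ s ∈ U, x s) :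
    ∃ z ∈ convexHull ℝ {v : α → ℝ | ∃ B : Finset α, IsBase F B ∧
      v = fun s => if s ∈ B then (1 : ℝ) else 0}, z ≤ x := by
  classical
  set S0 : Set (α → ℝ) := {v : α → ℝ | ∃ B : Finset α, IsBase F B ∧
      v = fun s => if s ∈ B then (1 : ℝ) else 0} with hS0
  by_contra hnot
  push_neg at hnot
  -- the up-hull as sum of compact convex and closed convex
  have hfin : S0.Finite := Set.Finite.subset
    (Set.finite_range fun B : Finset α => fun s => if s ∈ B then (1 : ℝ) else 0)
    (by rintro v ⟨B, -, rfl⟩; exact ⟨B, rfl⟩)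
  have hK : IsCompact (convexHull ℝ S0) := hfin.isCompact_convexHull ℝ
  have hclosed : IsClosed (convexHull ℝ S0 + Set.Ici (0 : α → ℝ)) :=
    IsClosed.add_left_of_isCompact isClosed_Ici hK
  have hconv : Convex ℝ (convexHull ℝ S0 + Set.Ici (0 : α → ℝ)) :=
    (convex_convexHull ℝ S0).add (convex_Ici 0)
  have hxnot : x ∉ convexHull ℝ S0 + Set.Ici (0 : α → ℝ) := by
    intro hmem
    rw [Set.mem_add] at hmem
    obtain ⟨z, hz, y, hy, hzy⟩ := hmem
    exact hnot z hz (hzy ▸ le_add_of_nonneg_right hy)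
  obtain ⟨f, u, hfx, hfb⟩ := geometric_hahn_banach_point_closed hconv hclosed hxnot
  set w : α → ℝ := fun s => f (fun j => if s = j then (1 : ℝ) else 0) with hw
  have hfeval : ∀ v : α → ℝ, f v = ∑ s : α, v s * w s := by
    intro v
    conv_lhs => rw [pi_eq_sum_univ v]
    rw [map_sum]
    refine Finset.sum_congr rfl fun s _ => ?_
    rw [map_smul, smul_eq_mul, ← congrFun hw s]
  have hmem_up : ∀ z ∈ convexHull ℝ S0, ∀ y : α → ℝ, 0 ≤ y → u < f (z + y) :=
    fun z hz y hy => hfb _ (Set.mem_add.2 ⟨z, hz, y, hy, rfl⟩)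
  -- a base exists
  obtain ⟨X0, hX0F, -, hX0c⟩ := grank_spec F hEmpty Finset.univ
  have hX0base : IsBase F X0 := ⟨hX0F, fun C hC => hX0c ▸ le_grank F hC (Finset.subset_univ C)⟩
  have hz0 : (fun s => if s ∈ X0 then (1 : ℝ) else 0) ∈ convexHull ℝ S0 :=
    subset_convexHull ℝ S0 ⟨X0, hX0base, rfl⟩
  have huz0 : u < f (fun s => if s ∈ X0 then (1 : ℝ) else 0) := by
    have := hmem_up _ hz0 0 (le_refl 0)
    simpa using this
  -- w is nonnegative
  have hwpos : ∀ s : α, 0 ≤ w s := by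
    intro s
    by_contra hws
    push_neg at hws
    set z0 : α → ℝ := fun s => if s ∈ X0 then (1 : ℝ) else 0 with hz0def
    set t : ℝ := (u - f z0 - 1) / w s with ht
    have htpos : 0 ≤ t := div_nonneg_of_nonpos (by simp only [hz0def]; linarith [huz0]) hws.le
    have h1 : u < f (z0 + t • (fun j => if s = j then (1 : ℝ) else 0)) := by
      refine hmem_up _ hz0 _ ?_
      intro j
      simp only [Pi.zero_apply, Pi.smul_apply, smul_eq_mul]
      exact mul_nonneg htpos (by split <;> norm_num)
    rw [map_add, map_smul, smul_eq_mul, ← congrFun hw s] at h1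
    have h2 : t * w s = u - f z0 - 1 := div_mul_cancel₀ _ (ne_of_lt hws)
    rw [h2] at h1
    linarith
  -- sorted list of all elements, descending in w
  set r : α → α → Bool := fun a b => decide (w b ≤ w a) with hr
  set l : List α := Finset.univ.toList.mergeSort r with hl
  have hperm : l.Perm Finset.univ.toList := List.mergeSort_perm _ r
  have hnd : l.Nodup := hperm.nodup_iff.2 (Finset.nodup_toList _)
  have hltf : l.toFinset = Finset.univ := by
    rw [List.toFinset_eq_of_perm _ _ hperm, Finset.toList_toFinset]
  have hsorted : l.Pairwise fun a b => w b ≤ w a := by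
    have h := List.pairwise_mergeSort (le := r)
      (fun a b c hab hbc => by
        simp only [hr, decide_eq_true_eq] at *; linarith)
      (fun a b => by simp only [hr, Bool.or_eq_true, decide_eq_true_eq]; exact le_total _ _)
      Finset.univ.toList
    rw [← hl] at h
    exact h.imp (by simp only [hr, decide_eq_true_eq]; exact fun h => h)
  have hget : ∀ i j : Fin l.length, i ≤ j → w (l.get j) ≤ w (l.get i) := by
    intro i j hij
    rcases eq_or_lt_of_le hij with h | h
    · rw [show i = j from h]
    · exact List.pairwise_iff_get.1 hsorted i j h
  -- the chain base
  obtain ⟨B, hBF, hBsub, hBcard, hBi⟩ := grank_chain F hEmpty hSub hExch l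
  set T : ℕ → Finset α := fun i => Finset.univ \ (l.take i).toFinset with hT
  have hTdrop : ∀ i : ℕ, T i = (l.drop i).toFinset := by
    intro i
    have hnd2 : (l.take i ++ l.drop i).Nodup := by
      rw [List.take_append_drop]; exact hnd
    have hdisj := List.disjoint_of_nodup_append hnd2
    ext a
    have hmem : a ∈ l := by rw [← List.mem_toFinset, hltf]; exact Finset.mem_univ a
    have hmem2 : a ∈ l.take i ++ l.drop i := by rw [List.take_append_drop]; exact hmem
    simp only [hT, Finset.mem_sdiff, Finset.mem_univ, true_and, List.mem_toFinset]
    constructor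
    · intro hnt
      rcases List.mem_append.1 hmem2 with h | h
      · exact absurd h hnt
      · exact h
    · intro hd hnt
      exact hdisj hnt hd
  have hTcard : ∀ i : ℕ, (B ∩ T i).card = grank F (T i) := by
    intro i
    refine le_antisymm
      (le_grank F (hSub B hBF _ Finset.inter_subset_left) Finset.inter_subset_right) ?_
    rw [hTdrop i]
    exact hBi i
  have hBbase : IsBase F B := by
    refine ⟨hBF, fun C hC => ?_⟩
    have hBc : B.card = grank F Finset.univ := by rw [hBcard, hltf]
    exact hBc ▸ le_grank F hC (Finset.subset_univ C)
  have hub : u < f (fun s => if s ∈ B then (1 : ℝ) else 0) := by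
    have := hmem_up _ (subset_convexHull ℝ S0 ⟨B, hBbase, rfl⟩) 0 (le_refl 0)
    simpa using this
  -- successor structure of T
  have hTmem : ∀ i : Fin l.length, l.get i ∈ T ↑i := by
    intro i
    rw [hTdrop]
    rw [List.mem_toFinset]
    rw [show l.drop ↑i = l.get i :: l.drop (↑i + 1) from List.drop_eq_getElem_cons i.isLt]
    exact List.mem_cons_self
  have hTsucc : ∀ i : Fin l.length, T (↑i + 1) = (T ↑i).erase (l.get i) := by
    intro i
    have htake : l.take (↑i + 1) = l.take ↑i ++ [l.get i] := by
      rw [List.take_succ, List.getElem?_eq_getElem i.isLt]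
      rfl
    ext a
    simp only [hT, htake, Finset.mem_sdiff, Finset.mem_univ, true_and, Finset.mem_erase,
      List.toFinset_append, Finset.mem_union, List.mem_toFinset, List.toFinset_cons,
      List.toFinset_nil, insert_empty_eq, Finset.mem_insert, Finset.notMem_empty,
      List.mem_singleton, Finset.mem_singleton, or_false]
    tauto
  -- indicator identity
  have hind : ∀ i : Fin l.length,
      (grank F (T ↑i) : ℝ) - grank F (T (↑i + 1)) = (if l.get i ∈ B then (1 : ℝ) else 0) := by
    intro i
    rw [← hTcard, ← hTcard, hTsucc i]
    by_cases hb : l.get i ∈ B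
    · rw [if_pos hb]
      have he : B ∩ (T ↑i).erase (l.get i) = (B ∩ T ↑i).erase (l.get i) := by
        ext a
        simp only [Finset.mem_inter, Finset.mem_erase]
        tauto
      rw [he, Finset.card_erase_of_mem (Finset.mem_inter.2 ⟨hb, hTmem i⟩)]
      have hpos : 1 ≤ (B ∩ T ↑i).card :=
        Finset.card_pos.2 ⟨l.get i, Finset.mem_inter.2 ⟨hb, hTmem i⟩⟩
      rw [Nat.cast_sub hpos]
      push_cast
      ring
    · rw [if_neg hb]
      have he : B ∩ (T ↑i).erase (l.get i) = B ∩ T ↑i := by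
        ext a
        simp only [Finset.mem_inter, Finset.mem_erase]
        constructor
        · tauto
        · intro ⟨h1, h2⟩
          exact ⟨h1, fun hc => hb (hc ▸ h1), h2⟩
      rw [he]
      ring
  -- the sequences
  set wseq : ℕ → ℝ := fun i => if h : i < l.length then w (l.get ⟨i, h⟩) else 0 with hwseq
  set cseq : ℕ → ℝ := fun i => if h : i < l.length then
      x (l.get ⟨i, h⟩) - ((grank F (T i) : ℝ) - grank F (T (i + 1))) else 0 with hcseq
  have hwseq0 : ∀ i : ℕ, 0 ≤ wseq i := by
    intro i
    rw [hwseq]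
    dsimp only
    split
    · exact hwpos _
    · exact le_refl 0
  have hwanti : ∀ i j : ℕ, i ≤ j → wseq j ≤ wseq i := by
    intro i j hij
    by_cases hj : j < l.length
    · have hi : i < l.length := lt_of_le_of_lt hij hj
      rw [hwseq]
      dsimp only
      rw [dif_pos hj, dif_pos hi]
      exact hget ⟨i, hi⟩ ⟨j, hj⟩ hij
    · have : wseq j = 0 := by rw [hwseq]; dsimp only; rw [dif_neg hj]
      rw [this]
      exact hwseq0 i
  have hT0 : T 0 = Finset.univ := by simp [hT]
  -- partial sums of cseq are nonnegative
  have hkey : ∀ k : ℕ, k ≤ l.length → 0 ≤ ∑ i ∈ Finset.range k, cseq i := by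
    intro k hk
    have hndk : (l.take k).Nodup := (List.take_sublist k l).nodup hnd
    have hlen : (l.take k).length = k := by rw [List.length_take]; omega
    have e1 : ∑ i ∈ Finset.range k, cseq i
        = (∑ i ∈ Finset.range k, (if h : i < l.length then x (l.get ⟨i, h⟩) else 0))
          - ∑ i ∈ Finset.range k, ((grank F (T i) : ℝ) - grank F (T (i + 1))) := by
      rw [← Finset.sum_sub_distrib]
      refine Finset.sum_congr rfl fun i hi => ?_
      have hi' : i < l.length := lt_of_lt_of_le (Finset.mem_range.1 hi) hk
      rw [hcseq]
      dsimp only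
      rw [dif_pos hi', dif_pos hi']
    have e2 : ∑ i ∈ Finset.range k, ((grank F (T i) : ℝ) - grank F (T (i + 1)))
        = (grank F (T 0) : ℝ) - grank F (T k) :=
      Finset.sum_range_sub' (fun i => (grank F (T i) : ℝ)) k
    have e3 : ∑ i ∈ Finset.range k, (if h : i < l.length then x (l.get ⟨i, h⟩) else 0)
        = ∑ s ∈ (l.take k).toFinset, x s := by
      rw [list_sum_eq' x (l.take k) hndk]
      refine Finset.sum_congr (by rw [hlen]) fun i hi => ?_
      have hitk : i < (l.take k).length := Finset.mem_range.1 hi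
      have hik : i < k := by omega
      have hil : i < l.length := by omega
      rw [dif_pos hil, dif_pos hitk]
      congr 1
      exact List.getElem_take' hil hik
    have e4 := hx ((l.take k).toFinset)
    have e5 : Finset.univ \ (l.take k).toFinset = T k := rfl
    rw [e1, e2, e3, hT0]
    rw [e5] at e4
    linarith
  have hcsum : ∀ k : ℕ, 0 ≤ ∑ i ∈ Finset.range k, cseq i := by
    intro k
    by_cases hk : k ≤ l.length
    · exact hkey k hk
    · have : ∑ i ∈ Finset.range k, cseq i = ∑ i ∈ Finset.range l.length, cseq i := by
        refine (Finset.sum_subset (Finset.range_subset_range.2 (by omega)) fun i _ hnotin => ?_).symm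
        have hil : ¬ i < l.length := by
          simp only [Finset.mem_range] at hnotin
          omega
        rw [hcseq]
        dsimp only
        rw [dif_neg hil]
      rw [this]
      exact hkey l.length (le_refl _)
  have habel := abel_main wseq cseq l.length hwanti hwseq0 hcsum
  -- rewrite the abel sum as f x - f (indicator of B)
  have hfxeq : f x = ∑ i : Fin l.length, x (l.get i) * w (l.get i) := by
    rw [hfeval x, ← hltf, list_sum_eq (fun s => x s * w s) l hnd]
  have hfBeq : f (fun s => if s ∈ B then (1 : ℝ) else 0)
      = ∑ i : Fin l.length, (if l.get i ∈ B then (1 : ℝ) else 0) * w (l.get i) := by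
    rw [hfeval, ← hltf, list_sum_eq (fun s => (if s ∈ B then (1 : ℝ) else 0) * w s) l hnd]
  have hsum : ∑ i ∈ Finset.range l.length, wseq i * cseq i
      = f x - f (fun s => if s ∈ B then (1 : ℝ) else 0) := by
    rw [hfxeq, hfBeq, ← Fin.sum_univ_eq_sum_range (fun i => wseq i * cseq i) l.length,
      ← Finset.sum_sub_distrib]
    refine Finset.sum_congr rfl fun i _ => ?_
    rw [hwseq, hcseq]
    dsimp only
    rw [dif_pos i.isLt, dif_pos i.isLt, Fin.eta, hind i]
    ring
  rw [hsum] at habel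
  linarith


/-- Reformulation of Edmonds' matroid polytope theorem: the up-hull of the base
polytope of a matroid equals `{x : x(U) ≥ r(S) - r(S \ U) for all U ⊆ S}`. -/
theorem statement3 (F : Set (Finset α)) (hEmpty : (∅ : Finset α) ∈ F)
    (hSub : ∀ X ∈ F, ∀ Y : Finset α, Y ⊆ X → Y ∈ F)
    (hExch : ∀ X ∈ F, ∀ Y ∈ F, X.card < Y.card → ∃ y ∈ Y, y ∉ X ∧ insert y X ∈ F) :
    {x : α → ℝ | ∃ z ∈ convexHull ℝ
        {v : α → ℝ | ∃ B : Finset α, IsBase F B ∧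
          v = fun s => if s ∈ B then (1 : ℝ) else 0},
      z ≤ x} =
    {x : α → ℝ | ∀ U : Finset α,
      (grank F Finset.univ : ℝ) - (grank F (Finset.univ \ U) : ℝ) ≤ ∑ s ∈ U, x s} := by
  ext x
  simp only [Set.mem_setOf_eq]
  constructor
  · rintro ⟨z, hz, hzx⟩ U
    exact (easy_dir F hEmpty hSub hz U).trans (Finset.sum_le_sum fun s _ => hzx s)
  · exact hard_dir F hEmpty hSub hExch x
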